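/- Let (V,E) and (W,F) be Bratteli diagrams with embeddings ξ, ξ⁰, ξ¹ as specified, and let R = R_E ∪ ⋃_{n≥1} ⋃_{(p,q)∈I_n^W} (δ^{1,0}_{p,q} ∪ δ^{0,1}_{q,p}). A Borel probability measure μ on X_E is R-invariant if and only if it is R_E-invariant. -/

import Mathlib

open MeasureTheory

structure Bratteli where
  V : ℕ → Type
  E : ℕ → Type
  src : (n : ℕ) → E n → V n
  tgt : (n : ℕ) → E n → V (n + 1)
  V_finite : ∀ n, Finite (V n)
  V_nonempty : ∀ n, Nonempty (V n)
  V0_subsingleton : Subsingleton (V 0)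
  E_finite : ∀ n, Finite (E n)
  E_nonempty : ∀ n, Nonempty (E n)

namespace Bratteli

variable (D : Bratteli)

instance (n : ℕ) : Finite (D.E n) := D.E_finite n
instance (n : ℕ) : Finite (D.V n) := D.V_finite n
instance (n : ℕ) : TopologicalSpace (D.E n) := ⊥
instance (n : ℕ) : DiscreteTopology (D.E n) := ⟨rfl⟩

/-- The infinite path space `X_E`.  Coordinate `k` corresponds to the edge `x_{k+1}`
of the paper, lying in the edge set `E_{k+1}` (between vertex levels `k` and `k+1`). -/
def X : Type := { x : (n : ℕ) → D.E n // ∀ n, D.tgt n (x n) = D.src (n + 1) (x (n + 1)) }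

instance : TopologicalSpace D.X :=
  inferInstanceAs (TopologicalSpace
    { x : (n : ℕ) → D.E n // ∀ n, D.tgt n (x n) = D.src (n + 1) (x (n + 1)) })

/-- `p` (a full choice of one edge at every level) is a finite path of length `n`
when restricted to its first `n` coordinates, i.e. coordinates `0,…,n-1` are
composable.  A path of length `n` represents an element of `E_{0,n}` of the paper. -/
def IsPath (n : ℕ) (p : (k : ℕ) → D.E k) : Prop :=
  ∀ k, k + 1 < n → D.tgt k (p k) = D.src (k + 1) (p (k + 1))

/-- The cylinder set `U(p)` determined by the first `n` coordinates of `p`. -/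
def cyl (n : ℕ) (p : (k : ℕ) → D.E k) : Set D.X :=
  { x | ∀ k, k < n → x.1 k = p k }

/-- The set `β_{p,q}` for `p, q ∈ E_{0,n}`. -/
def beta (n : ℕ) (p q : (k : ℕ) → D.E k) : Set (D.X × D.X) :=
  { z | (∀ k, k < n → z.1.1 k = p k ∧ z.2.1 k = q k) ∧ ∀ k, n ≤ k → z.1.1 k = z.2.1 k }

/-- Tail equivalence `R_E`. -/
def RE : Set (D.X × D.X) :=
  ⋃ (n : ℕ) (p : (k : ℕ) → D.E k) (q : (k : ℕ) → D.E k)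
    (_ : D.IsPath (n + 1) p) (_ : D.IsPath (n + 1) q)
    (_ : D.tgt n (p n) = D.tgt n (q n)), D.beta (n + 1) p q

instance : MeasurableSpace D.X := borel D.X

/-- A (Borel) measure `μ` is invariant for a relation `S ⊆ X × X` if for every
Borel subset `U ⊆ S` on which both coordinate projections are injective, the
images of `U` under the two projections have the same measure. -/
def Invariant (μ : Measure D.X) (S : Set (D.X × D.X)) : Prop :=
  ∀ U : Set (D.X × D.X), U ⊆ S → MeasurableSet U →
    Set.InjOn Prod.fst U → Set.InjOn Prod.snd U →
    μ (Prod.fst '' U) = μ (Prod.snd '' U)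

end Bratteli

/-- The inverse of a relation. -/
def relInv {α : Type*} (S : Set (α × α)) : Set (α × α) := { z | (z.2, z.1) ∈ S }

/-- Composition of relations: `S ∘ T = {(x,y) : ∃ z, (x,z) ∈ S, (z,y) ∈ T}`. -/
def relComp {α : Type*} (S T : Set (α × α)) : Set (α × α) :=
  { z | ∃ w, (z.1, w) ∈ S ∧ (w, z.2) ∈ T }

/-- A pair of disjoint embeddings `ξ⁰, ξ¹` of a Bratteli diagram `(W,F)` (here `B`)
into a Bratteli diagram `(V,E)` (here `D`), over a common vertex embedding `ξ`. -/
structure BratteliEmb (B D : Bratteli) where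
  xiV : (n : ℕ) → B.V n → D.V n
  xi0 : (n : ℕ) → B.E n → D.E n
  xi1 : (n : ℕ) → B.E n → D.E n
  xiV_inj : ∀ n, Function.Injective (xiV n)
  xi0_inj : ∀ n, Function.Injective (xi0 n)
  xi1_inj : ∀ n, Function.Injective (xi1 n)
  src_xi0 : ∀ n (f : B.E n), D.src n (xi0 n f) = xiV n (B.src n f)
  tgt_xi0 : ∀ n (f : B.E n), D.tgt n (xi0 n f) = xiV (n + 1) (B.tgt n f)
  src_xi1 : ∀ n (f : B.E n), D.src n (xi1 n f) = xiV n (B.src n f)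
  tgt_xi1 : ∀ n (f : B.E n), D.tgt n (xi1 n f) = xiV (n + 1) (B.tgt n f)
  disjoint01 : ∀ n (f g : B.E n), xi0 n f ≠ xi1 n g

namespace BratteliEmb

variable {B D : Bratteli} (E : BratteliEmb B D)

/-- The set `λ^{1,0}_{p,q}` for `(p,q) ∈ I_n^W` (paths of length `n+1`): pairs whose first
`n+1` coordinates are `p` resp. `q`, and whose remaining coordinates run through
`ξ¹(f_k)` resp. `ξ⁰(f_k)` for a common infinite path `(f_k)` of `(W,F)`. -/
def lam (n : ℕ) (p q : (k : ℕ) → D.E k) : Set (D.X × D.X) :=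
  { z | (∀ k, k < n + 1 → z.1.1 k = p k ∧ z.2.1 k = q k) ∧
        ∀ k, n + 1 ≤ k → ∃ f : B.E k, z.1.1 k = E.xi1 k f ∧ z.2.1 k = E.xi0 k f }

/-- The set `δ^{1,0}_{p,q}` for `(p,q) ∈ I_n^W`: the union of `λ^{1,0}_{p,q}` with the pairs
which, after a finite common block of `(ξ¹,ξ⁰)`-matched edges, either swap to a
`(ξ⁰,ξ¹)`-matched edge and then agree, or meet a common edge outside
`ξ⁰(F) ∪ ξ¹(F)` and then agree. -/
def delta (n : ℕ) (p q : (k : ℕ) → D.E k) : Set (D.X × D.X) :=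
  E.lam n p q ∪
  { z | (∀ k, k < n + 1 → z.1.1 k = p k ∧ z.2.1 k = q k) ∧
        ∃ m : ℕ,
          (∀ k, n + 1 ≤ k → k ≤ n + 1 + m →
            ∃ f : B.E k, z.1.1 k = E.xi1 k f ∧ z.2.1 k = E.xi0 k f) ∧
          (∃ f : B.E (n + m + 2), z.1.1 (n + m + 2) = E.xi0 (n + m + 2) f ∧
            z.2.1 (n + m + 2) = E.xi1 (n + m + 2) f) ∧
          (∀ k, n + m + 2 < k → z.1.1 k = z.2.1 k) } ∪
  { z | (∀ k, k < n + 1 → z.1.1 k = p k ∧ z.2.1 k = q k) ∧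
        ∃ m : ℕ,
          (∀ k, n + 1 ≤ k → k ≤ n + 1 + m →
            ∃ f : B.E k, z.1.1 k = E.xi1 k f ∧ z.2.1 k = E.xi0 k f) ∧
          (∀ f : B.E (n + m + 2), z.1.1 (n + m + 2) ≠ E.xi0 (n + m + 2) f ∧
            z.1.1 (n + m + 2) ≠ E.xi1 (n + m + 2) f) ∧
          (∀ k, n + m + 2 ≤ k → z.1.1 k = z.2.1 k) }

/-- The equivalence relation `R`, generated by `R_E` together with all
`δ^{1,0}_{p,q}` and `δ^{0,1}_{q,p}` for `(p,q) ∈ I_n^W`, `n ≥ 1`. -/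
def Rfull : Set (D.X × D.X) :=
  D.RE ∪
  ⋃ (n : ℕ) (p : (k : ℕ) → D.E k) (q : (k : ℕ) → D.E k)
    (_ : D.IsPath (n + 1) p) (_ : D.IsPath (n + 1) q)
    (_ : D.tgt n (p n) = D.tgt n (q n))
    (_ : ∃ w : B.V (n + 1), D.tgt n (p n) = E.xiV (n + 1) w),
    (E.delta n p q ∪ relInv (E.delta n p q))

/-- The compact open subrelation `R_n` (`n+1` in the indexing of the paper). -/
def Rn (n : ℕ) : Set (D.X × D.X) :=
  (⋃ (p : (k : ℕ) → D.E k) (q : (k : ℕ) → D.E k)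
    (_ : D.IsPath (n + 1) p) (_ : D.IsPath (n + 1) q)
    (_ : D.tgt n (p n) = D.tgt n (q n)), D.beta (n + 1) p q) ∪
  ⋃ (p : (k : ℕ) → D.E k) (q : (k : ℕ) → D.E k)
    (_ : D.IsPath (n + 1) p) (_ : D.IsPath (n + 1) q)
    (_ : D.tgt n (p n) = D.tgt n (q n))
    (_ : ∃ w : B.V (n + 1), D.tgt n (p n) = E.xiV (n + 1) w),
    (E.delta n p q ∪ relInv (E.delta n p q))

end BratteliEmb
section Auxiliary

open Set Filter Topology

namespace Bratteli

variable {D : Bratteli}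

lemma isClosed_pathProp (D : Bratteli) :
    IsClosed {x : (n : ℕ) → D.E n | ∀ n, D.tgt n (x n) = D.src (n + 1) (x (n + 1))} := by
  have h : {x : (n : ℕ) → D.E n | ∀ n, D.tgt n (x n) = D.src (n + 1) (x (n + 1))}
      = ⋂ n, {x : (n : ℕ) → D.E n | D.tgt n (x n) = D.src (n + 1) (x (n + 1))} := by
    ext x; simp [Set.mem_iInter]
  rw [h]
  refine isClosed_iInter fun n => ?_
  have hc : Continuous fun x : (n : ℕ) → D.E n => (x n, x (n + 1)) :=
    (continuous_apply n).prodMk (continuous_apply (n + 1))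
  exact (isClosed_discrete {p : D.E n × D.E (n + 1) | D.tgt n p.1 = D.src (n + 1) p.2}).preimage hc

instance : CompactSpace D.X :=
  isCompact_iff_compactSpace.mp (IsClosed.isCompact (isClosed_pathProp D))

instance : PolishSpace D.X := (isClosed_pathProp D).polishSpace

instance : BorelSpace D.X := ⟨rfl⟩

lemma continuous_coord (k : ℕ) : Continuous fun x : D.X => x.1 k :=
  (continuous_apply k).comp continuous_subtype_val

lemma isClosed_pairCoord {k l : ℕ} (P : D.E k → D.E l → Prop) :
    IsClosed {z : D.X × D.X | P (z.1.1 k) (z.2.1 l)} := by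
  have hc : Continuous fun z : D.X × D.X => (z.1.1 k, z.2.1 l) :=
    ((continuous_coord k).comp continuous_fst).prodMk ((continuous_coord l).comp continuous_snd)
  exact (isClosed_discrete {p : D.E k × D.E l | P p.1 p.2}).preimage hc

lemma isClosed_forall_coord (Q : ℕ → Prop) (P : ∀ k, D.E k → D.E k → Prop) :
    IsClosed {z : D.X × D.X | ∀ k, Q k → P k (z.1.1 k) (z.2.1 k)} := by
  have h : {z : D.X × D.X | ∀ k, Q k → P k (z.1.1 k) (z.2.1 k)}
      = ⋂ k, ⋂ (_ : Q k), {z : D.X × D.X | P k (z.1.1 k) (z.2.1 k)} := by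
    ext z; simp
  rw [h]
  exact isClosed_iInter fun k => isClosed_iInter fun _ => isClosed_pairCoord _

/-- The set of pairs agreeing from coordinate `n` on. -/
def tailEq (D : Bratteli) (n : ℕ) : Set (D.X × D.X) :=
  {z | ∀ k, n ≤ k → z.1.1 k = z.2.1 k}

lemma isClosed_tailEq (n : ℕ) : IsClosed (D.tailEq n) :=
  isClosed_forall_coord (fun k => n ≤ k) (fun k a b => a = b)

lemma mem_RE_of_tailEq {z : D.X × D.X} {n : ℕ} (hz : z ∈ D.tailEq n) : z ∈ D.RE := by
  simp only [Bratteli.RE, Set.mem_iUnion]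
  have h1 : z.1.1 (n + 1) = z.2.1 (n + 1) := hz (n + 1) (Nat.le_succ n)
  refine ⟨n, z.1.1, z.2.1, fun k _ => z.1.2 k, fun k _ => z.2.2 k, ?_, ?_⟩
  · rw [z.1.2 n, z.2.2 n, h1]
  · exact ⟨fun k _ => ⟨rfl, rfl⟩, fun k hk => hz k (le_trans (Nat.le_succ n) hk)⟩

lemma RE_eq : D.RE = ⋃ n, D.tailEq n := by
  apply subset_antisymm
  · intro z hz
    simp only [Bratteli.RE, Set.mem_iUnion] at hz
    obtain ⟨n, p, q, _, _, _, hmem⟩ := hz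
    exact Set.mem_iUnion.mpr ⟨n + 1, hmem.2⟩
  · intro z hz
    obtain ⟨n, hn⟩ := Set.mem_iUnion.mp hz
    exact mem_RE_of_tailEq hn

lemma measurableSet_RE : MeasurableSet D.RE := by
  rw [RE_eq]
  exact MeasurableSet.iUnion fun n => (isClosed_tailEq n).measurableSet

end Bratteli

end Auxiliary
section Aux2

open Set Filter Topology

namespace BratteliEmb

variable {B D : Bratteli} (E : BratteliEmb B D)

/-- The embedding with the roles of `ξ⁰` and `ξ¹` exchanged. -/
def swapped : BratteliEmb B D where
  xiV := E.xiV
  xi0 := E.xi1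
  xi1 := E.xi0
  xiV_inj := E.xiV_inj
  xi0_inj := E.xi1_inj
  xi1_inj := E.xi0_inj
  src_xi0 := E.src_xi1
  tgt_xi0 := E.tgt_xi1
  src_xi1 := E.src_xi0
  tgt_xi1 := E.tgt_xi0
  disjoint01 := fun n f g h => E.disjoint01 n g f h.symm

/-- The set of paths whose coordinates from `N` on are all in the range of `ξ¹`. -/
def dom (N : ℕ) : Set D.X := {x | ∀ k, N ≤ k → ∃ f, x.1 k = E.xi1 k f}

/-- The graph of the map exchanging a `ξ¹`-tail (from coordinate `N` on) for the
corresponding `ξ⁰`-tail. -/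
def swapRel (N : ℕ) : Set (D.X × D.X) :=
  {z | (∀ k, k < N → z.2.1 k = z.1.1 k) ∧
    ∀ k, N ≤ k → ∃ f, z.1.1 k = E.xi1 k f ∧ z.2.1 k = E.xi0 k f}

/-- The graph of the finite swap, exchanging only the coordinates in `[N, m]`. -/
def swapRelFin (N m : ℕ) : Set (D.X × D.X) :=
  {z | (∀ k, k < N → z.2.1 k = z.1.1 k) ∧
    (∀ k, N ≤ k ∧ k ≤ m → ∃ f, z.1.1 k = E.xi1 k f ∧ z.2.1 k = E.xi0 k f) ∧
    ∀ k, m < k → z.2.1 k = z.1.1 k}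

/-- The hull relation: like `swapRelFin` but with no constraint past `m`. -/
def hullRel (N m : ℕ) : Set (D.X × D.X) :=
  {z | (∀ k, k < N → z.2.1 k = z.1.1 k) ∧
    ∀ k, N ≤ k ∧ k ≤ m → ∃ f, z.1.1 k = E.xi1 k f ∧ z.2.1 k = E.xi0 k f}

lemma isClosed_swapRel (N : ℕ) : IsClosed (E.swapRel N) := by
  have h : E.swapRel N =
      {z : D.X × D.X | ∀ k, k < N → z.2.1 k = z.1.1 k} ∩
      {z : D.X × D.X | ∀ k, N ≤ k → ∃ f, z.1.1 k = E.xi1 k f ∧ z.2.1 k = E.xi0 k f} := rfl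
  rw [h]
  exact (Bratteli.isClosed_forall_coord (fun k => k < N) (fun k a b => b = a)).inter
    (Bratteli.isClosed_forall_coord (fun k => N ≤ k)
      (fun k a b => ∃ f, a = E.xi1 k f ∧ b = E.xi0 k f))

lemma isClosed_swapRelFin (N m : ℕ) : IsClosed (E.swapRelFin N m) := by
  have h : E.swapRelFin N m =
      {z : D.X × D.X | ∀ k, k < N → z.2.1 k = z.1.1 k} ∩
      ({z : D.X × D.X | ∀ k, N ≤ k ∧ k ≤ m →
          ∃ f, z.1.1 k = E.xi1 k f ∧ z.2.1 k = E.xi0 k f} ∩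
       {z : D.X × D.X | ∀ k, m < k → z.2.1 k = z.1.1 k}) := rfl
  rw [h]
  exact (Bratteli.isClosed_forall_coord (fun k => k < N) (fun k a b => b = a)).inter
    ((Bratteli.isClosed_forall_coord (fun k => N ≤ k ∧ k ≤ m)
        (fun k a b => ∃ f, a = E.xi1 k f ∧ b = E.xi0 k f)).inter
      (Bratteli.isClosed_forall_coord (fun k => m < k) (fun k a b => b = a)))

lemma isClosed_hullRel (N m : ℕ) : IsClosed (E.hullRel N m) := by
  have h : E.hullRel N m =
      {z : D.X × D.X | ∀ k, k < N → z.2.1 k = z.1.1 k} ∩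
      {z : D.X × D.X | ∀ k, N ≤ k ∧ k ≤ m →
        ∃ f, z.1.1 k = E.xi1 k f ∧ z.2.1 k = E.xi0 k f} := rfl
  rw [h]
  exact (Bratteli.isClosed_forall_coord (fun k => k < N) (fun k a b => b = a)).inter
    (Bratteli.isClosed_forall_coord (fun k => N ≤ k ∧ k ≤ m)
      (fun k a b => ∃ f, a = E.xi1 k f ∧ b = E.xi0 k f))

lemma injOn_fst_swapRel (N : ℕ) : Set.InjOn Prod.fst (E.swapRel N) := by
  intro z hz z' hz' h
  refine Prod.ext h (Subtype.ext (funext fun k => ?_))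
  rcases lt_or_ge k N with hk | hk
  · rw [hz.1 k hk, hz'.1 k hk, h]
  · obtain ⟨f, hf1, hf2⟩ := hz.2 k hk
    obtain ⟨f', hf1', hf2'⟩ := hz'.2 k hk
    have : f = f' := E.xi1_inj k (by rw [← hf1, ← hf1', h])
    rw [hf2, hf2', this]

lemma injOn_snd_swapRel (N : ℕ) : Set.InjOn Prod.snd (E.swapRel N) := by
  intro z hz z' hz' h
  refine Prod.ext (Subtype.ext (funext fun k => ?_)) h
  rcases lt_or_ge k N with hk | hk
  · rw [← hz.1 k hk, ← hz'.1 k hk, h]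
  · obtain ⟨f, hf1, hf2⟩ := hz.2 k hk
    obtain ⟨f', hf1', hf2'⟩ := hz'.2 k hk
    have : f = f' := E.xi0_inj k (by rw [← hf2, ← hf2', h])
    rw [hf1, hf1', this]

lemma injOn_fst_swapRelFin (N m : ℕ) : Set.InjOn Prod.fst (E.swapRelFin N m) := by
  intro z hz z' hz' h
  refine Prod.ext h (Subtype.ext (funext fun k => ?_))
  rcases lt_or_ge k N with hk | hk
  · rw [hz.1 k hk, hz'.1 k hk, h]
  · rcases le_or_gt k m with hk2 | hk2
    · obtain ⟨f, hf1, hf2⟩ := hz.2.1 k ⟨hk, hk2⟩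
      obtain ⟨f', hf1', hf2'⟩ := hz'.2.1 k ⟨hk, hk2⟩
      have : f = f' := E.xi1_inj k (by rw [← hf1, ← hf1', h])
      rw [hf2, hf2', this]
    · rw [hz.2.2 k hk2, hz'.2.2 k hk2, h]

lemma injOn_snd_swapRelFin (N m : ℕ) : Set.InjOn Prod.snd (E.swapRelFin N m) := by
  intro z hz z' hz' h
  refine Prod.ext (Subtype.ext (funext fun k => ?_)) h
  rcases lt_or_ge k N with hk | hk
  · rw [← hz.1 k hk, ← hz'.1 k hk, h]
  · rcases le_or_gt k m with hk2 | hk2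
    · obtain ⟨f, hf1, hf2⟩ := hz.2.1 k ⟨hk, hk2⟩
      obtain ⟨f', hf1', hf2'⟩ := hz'.2.1 k ⟨hk, hk2⟩
      have : f = f' := E.xi0_inj k (by rw [← hf2, ← hf2', h])
      rw [hf1, hf1', this]
    · rw [← hz.2.2 k hk2, ← hz'.2.2 k hk2, h]

lemma swapRel_swapped (N : ℕ) : (E.swapped).swapRel N = relInv (E.swapRel N) := by
  ext z
  constructor
  · rintro ⟨h1, h2⟩
    refine ⟨fun k hk => (h1 k hk).symm, fun k hk => ?_⟩
    obtain ⟨f, hf1, hf2⟩ := h2 k hk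
    exact ⟨f, hf2, hf1⟩
  · rintro ⟨h1, h2⟩
    refine ⟨fun k hk => (h1 k hk).symm, fun k hk => ?_⟩
    obtain ⟨f, hf1, hf2⟩ := h2 k hk
    exact ⟨f, hf2, hf1⟩

lemma exists_swap {N : ℕ} {x : D.X} (hx : x ∈ E.dom N) :
    ∃ y : D.X, (x, y) ∈ E.swapRel N := by
  choose F hF using hx
  set yf : ∀ k, D.E k := fun k => if h : N ≤ k then E.xi0 k (F k h) else x.1 k with hyf
  have hsrc : ∀ k, D.src k (yf k) = D.src k (x.1 k) := by
    intro k
    by_cases h : N ≤ k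
    · rw [hyf]; simp only [dif_pos h]
      rw [E.src_xi0, ← E.src_xi1, ← hF k h]
    · rw [hyf]; simp only [dif_neg h]
  have htgt : ∀ k, D.tgt k (yf k) = D.tgt k (x.1 k) := by
    intro k
    by_cases h : N ≤ k
    · rw [hyf]; simp only [dif_pos h]
      rw [E.tgt_xi0, ← E.tgt_xi1, ← hF k h]
    · rw [hyf]; simp only [dif_neg h]
  refine ⟨⟨yf, fun k => ?_⟩, fun k hk => ?_, fun k hk => ?_⟩
  · rw [htgt k, hsrc (k + 1), x.2 k]
  · show yf k = x.1 k
    rw [hyf]; simp only [dif_neg (not_le.mpr hk)]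
  · exact ⟨F k hk, hF k hk, dif_pos hk⟩

lemma exists_swapFin {N m : ℕ} {x : D.X} (hx : x ∈ E.dom N) :
    ∃ y : D.X, (x, y) ∈ E.swapRelFin N m := by
  choose F hF using hx
  set yf : ∀ k, D.E k := fun k => if h : N ≤ k ∧ k ≤ m then E.xi0 k (F k h.1) else x.1 k with hyf
  have hsrc : ∀ k, D.src k (yf k) = D.src k (x.1 k) := by
    intro k
    by_cases h : N ≤ k ∧ k ≤ m
    · rw [hyf]; simp only [dif_pos h]
      rw [E.src_xi0, ← E.src_xi1, ← hF k h.1]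
    · rw [hyf]; simp only [dif_neg h]
  have htgt : ∀ k, D.tgt k (yf k) = D.tgt k (x.1 k) := by
    intro k
    by_cases h : N ≤ k ∧ k ≤ m
    · rw [hyf]; simp only [dif_pos h]
      rw [E.tgt_xi0, ← E.tgt_xi1, ← hF k h.1]
    · rw [hyf]; simp only [dif_neg h]
  refine ⟨⟨yf, fun k => ?_⟩, fun k hk => ?_, fun k hk => ?_, fun k hk => ?_⟩
  · rw [htgt k, hsrc (k + 1), x.2 k]
  · show yf k = x.1 k
    rw [hyf]; simp only [dif_neg (fun h : N ≤ k ∧ k ≤ m => absurd h.1 (not_le.mpr hk))]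
  · exact ⟨F k hk.1, hF k hk.1, dif_pos hk⟩
  · show yf k = x.1 k
    rw [hyf]; simp only [dif_neg (fun h : N ≤ k ∧ k ≤ m => absurd h.2 (not_le.mpr hk))]

/-- The image of `A` under a relation `S`. -/
def relImg (S : Set (D.X × D.X)) (A : Set D.X) : Set D.X :=
  Prod.snd '' (S ∩ A ×ˢ Set.univ)

lemma mem_relImg {S : Set (D.X × D.X)} {A : Set D.X} {y : D.X} :
    y ∈ relImg S A ↔ ∃ x ∈ A, (x, y) ∈ S := by
  constructor
  · rintro ⟨z, ⟨hzS, hzA, -⟩, rfl⟩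
    exact ⟨z.1, hzA, hzS⟩
  · rintro ⟨x, hxA, hxS⟩
    exact ⟨(x, y), ⟨hxS, hxA, trivial⟩, rfl⟩

lemma relImg_mono {S S' : Set (D.X × D.X)} {A : Set D.X} (h : S ⊆ S') :
    relImg S A ⊆ relImg S' A :=
  Set.image_mono (Set.inter_subset_inter_left _ h)

lemma swapRelFin_subset_hullRel (N m : ℕ) : E.swapRelFin N m ⊆ E.hullRel N m :=
  fun _ hz => ⟨hz.1, hz.2.1⟩

lemma swapRel_subset_hullRel (N m : ℕ) : E.swapRel N ⊆ E.hullRel N m :=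
  fun _ hz => ⟨hz.1, fun k hk => hz.2 k hk.1⟩

lemma hullRel_antitone (N : ℕ) : Antitone (fun m => E.hullRel N m) := by
  intro m m' h z hz
  exact ⟨hz.1, fun k hk => hz.2 k ⟨hk.1, le_trans hk.2 h⟩⟩

end BratteliEmb

end Aux2
section Aux3

open Set Filter Topology MeasureTheory

namespace BratteliEmb

variable {B D : Bratteli} (E : BratteliEmb B D)

lemma mem_of_compact_approx {A : Set D.X} (hA : IsCompact A) {v : D.X}
    (h : ∀ m, ∃ x ∈ A, ∀ k, k ≤ m → x.1 k = v.1 k) : v ∈ A := by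
  classical
  choose a ha hagree using h
  have hA' : IsClosed (Subtype.val '' A : Set ((n : ℕ) → D.E n)) :=
    (hA.image continuous_subtype_val).isClosed
  have htend : Tendsto (fun m => (a m).1) atTop (𝓝 v.1) := by
    rw [tendsto_pi_nhds]
    intro k
    exact tendsto_atTop_of_eventually_const (i₀ := k) (fun i hi => hagree i k hi)
  have hv : v.1 ∈ Subtype.val '' A :=
    hA'.mem_of_tendsto htend (Filter.Eventually.of_forall fun m => ⟨a m, ha m, rfl⟩)
  obtain ⟨u, huA, hu⟩ := hv
  exact (Subtype.ext hu : u = v) ▸ huA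

lemma iInter_hull_subset {N : ℕ} {A : Set D.X} (hA : IsCompact A) :
    ⋂ m, relImg (E.hullRel N m) A ⊆ relImg (E.swapRel N) A := by
  intro y hy
  have hy' : ∀ m, ∃ x ∈ A, (x, y) ∈ E.hullRel N m :=
    fun m => mem_relImg.mp (Set.mem_iInter.mp hy m)
  have hex : ∀ k, N ≤ k → ∃ f, y.1 k = E.xi0 k f := by
    intro k hk
    obtain ⟨x, _, hx⟩ := hy' k
    obtain ⟨f, _, hf2⟩ := hx.2 k ⟨hk, le_refl k⟩
    exact ⟨f, hf2⟩
  choose F hF using hex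
  set vf : ∀ k, D.E k := fun k => if h : N ≤ k then E.xi1 k (F k h) else y.1 k with hvf
  have hsrc : ∀ k, D.src k (vf k) = D.src k (y.1 k) := by
    intro k
    by_cases h : N ≤ k
    · rw [hvf]; simp only [dif_pos h]
      rw [E.src_xi1, ← E.src_xi0, ← hF k h]
    · rw [hvf]; simp only [dif_neg h]
  have htgt : ∀ k, D.tgt k (vf k) = D.tgt k (y.1 k) := by
    intro k
    by_cases h : N ≤ k
    · rw [hvf]; simp only [dif_pos h]
      rw [E.tgt_xi1, ← E.tgt_xi0, ← hF k h]
    · rw [hvf]; simp only [dif_neg h]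
  set v : D.X := ⟨vf, fun k => by rw [htgt k, hsrc (k + 1), y.2 k]⟩ with hv
  have happrox : ∀ m, ∃ x ∈ A, ∀ k, k ≤ m → x.1 k = v.1 k := by
    intro m
    obtain ⟨x, hxA, hx⟩ := hy' m
    refine ⟨x, hxA, fun k hk => ?_⟩
    show x.1 k = vf k
    by_cases h : N ≤ k
    · obtain ⟨f, hf1, hf2⟩ := hx.2 k ⟨h, hk⟩
      have : f = F k h := E.xi0_inj k (by rw [← hf2, ← hF k h])
      rw [hf1, this, hvf]; simp only [dif_pos h]
    · rw [hvf]; simp only [dif_neg h]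
      exact (hx.1 k (not_le.mp h)).symm
  have hvA : v ∈ A := mem_of_compact_approx hA happrox
  refine mem_relImg.mpr ⟨v, hvA, ?_, ?_⟩
  · intro k hk
    show y.1 k = vf k
    rw [hvf]; simp only [dif_neg (not_le.mpr hk)]
  · intro k hk
    exact ⟨F k hk, dif_pos hk, hF k hk⟩

lemma isCompact_relImg {S : Set (D.X × D.X)} (hS : IsClosed S) {A : Set D.X}
    (hA : IsCompact A) : IsCompact (relImg S A) :=
  (((hA.prod isCompact_univ).inter_left hS).image continuous_snd)

lemma measurableSet_relImg {S : Set (D.X × D.X)} (hS : MeasurableSet S)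
    (hinj : Set.InjOn Prod.snd S) {A : Set D.X} (hA : MeasurableSet A) :
    MeasurableSet (relImg S A) :=
  (hS.inter (hA.prod MeasurableSet.univ)).image_of_continuousOn_injOn
    continuous_snd.continuousOn (hinj.mono Set.inter_subset_left)

variable {μ : Measure D.X} [IsProbabilityMeasure μ]

lemma lemFin (hμ : D.Invariant μ D.RE) {N m : ℕ} {A : Set D.X}
    (hA : MeasurableSet A) (hdom : A ⊆ E.dom N) :
    μ A = μ (relImg (E.swapRelFin N m) A) := by
  set U := E.swapRelFin N m ∩ A ×ˢ (Set.univ : Set D.X) with hU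
  have hUm : MeasurableSet U :=
    (E.isClosed_swapRelFin N m).measurableSet.inter (hA.prod MeasurableSet.univ)
  have hUsub : U ⊆ D.RE := by
    intro z hz
    exact Bratteli.mem_RE_of_tailEq (n := m + 1)
      (fun k hk => (hz.1.2.2 k (Nat.lt_of_succ_le hk)).symm)
  have hfst : Set.InjOn Prod.fst U :=
    (E.injOn_fst_swapRelFin N m).mono Set.inter_subset_left
  have hsnd : Set.InjOn Prod.snd U :=
    (E.injOn_snd_swapRelFin N m).mono Set.inter_subset_left
  have h1 : Prod.fst '' U = A := by
    apply subset_antisymm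
    · rintro _ ⟨z, ⟨-, hzA, -⟩, rfl⟩
      exact hzA
    · intro x hx
      obtain ⟨y, hy⟩ := E.exists_swapFin (m := m) (hdom hx)
      exact ⟨(x, y), ⟨hy, hx, trivial⟩, rfl⟩
  have := hμ U hUsub hUm hfst hsnd
  rw [h1] at this
  exact this

lemma lemCompact (hμ : D.Invariant μ D.RE) {N : ℕ} {A : Set D.X}
    (hA : IsCompact A) (hdom : A ⊆ E.dom N) :
    μ A ≤ μ (relImg (E.swapRel N) A) := by
  have hAm : MeasurableSet A := hA.isClosed.measurableSet
  have key : relImg (E.swapRel N) A = ⋂ m, relImg (E.hullRel N m) A := by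
    apply subset_antisymm
    · exact Set.subset_iInter fun m => relImg_mono (E.swapRel_subset_hullRel N m)
    · exact E.iInter_hull_subset hA
  have hcomp : ∀ m, IsCompact (relImg (E.hullRel N m) A) :=
    fun m => isCompact_relImg (E.isClosed_hullRel N m) hA
  have hanti : Antitone fun m => relImg (E.hullRel N m) A :=
    fun m m' h => relImg_mono (E.hullRel_antitone N h)
  have htend : Tendsto (fun m => μ (relImg (E.hullRel N m) A)) atTop
      (𝓝 (μ (⋂ m, relImg (E.hullRel N m) A))) :=
    tendsto_measure_iInter_atTop
      (fun m => (hcomp m).isClosed.measurableSet.nullMeasurableSet) hanti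
      ⟨0, measure_ne_top μ _⟩
  have hlow : ∀ m, μ A ≤ μ (relImg (E.hullRel N m) A) := by
    intro m
    rw [E.lemFin hμ hAm hdom (m := m)]
    exact measure_mono (relImg_mono (E.swapRelFin_subset_hullRel N m))
  rw [key]
  exact ge_of_tendsto' htend hlow

lemma lemMeas (hμ : D.Invariant μ D.RE) {N : ℕ} {A : Set D.X}
    (hA : MeasurableSet A) (hdom : A ⊆ E.dom N) :
    μ A = μ (relImg (E.swapRel N) A) := by
  apply le_antisymm
  · apply ENNReal.le_of_forall_pos_le_add
    intro ε hε _
    obtain ⟨K, hKA, hKc, hKlt⟩ := hA.exists_isCompact_lt_add (measure_ne_top μ A)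
      (ε := ε) (by exact_mod_cast hε.ne')
    have h1 : μ K ≤ μ (relImg (E.swapRel N) K) :=
      E.lemCompact hμ hKc (hKA.trans hdom)
    have h2 : relImg (E.swapRel N) K ⊆ relImg (E.swapRel N) A :=
      Set.image_mono (Set.inter_subset_inter_right _ (Set.prod_mono_left hKA))
    calc μ A ≤ μ K + ε := hKlt.le
    _ ≤ μ (relImg (E.swapRel N) A) + ε := by
        exact add_le_add (h1.trans (measure_mono h2)) le_rfl
  · have himgm : MeasurableSet (relImg (E.swapRel N) A) :=
      measurableSet_relImg (E.isClosed_swapRel N).measurableSet (E.injOn_snd_swapRel N) hA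
    apply ENNReal.le_of_forall_pos_le_add
    intro ε hε _
    obtain ⟨K, hKA, hKc, hKlt⟩ := himgm.exists_isCompact_lt_add (measure_ne_top μ _)
      (ε := ε) (by exact_mod_cast hε.ne')
    have hKdom : K ⊆ (E.swapped).dom N := by
      intro x' hx'
      obtain ⟨x, -, hG⟩ := mem_relImg.mp (hKA hx')
      intro k hk
      obtain ⟨f, -, hf2⟩ := hG.2 k hk
      exact ⟨f, hf2⟩
    have h1 : μ K ≤ μ (relImg ((E.swapped).swapRel N) K) :=
      (E.swapped).lemCompact hμ hKc hKdom
    have h2 : relImg ((E.swapped).swapRel N) K ⊆ A := by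
      intro y hy
      obtain ⟨x', hx'K, hrel⟩ := mem_relImg.mp hy
      rw [E.swapRel_swapped] at hrel
      obtain ⟨x, hxA, hG⟩ := mem_relImg.mp (hKA hx'K)
      have hxy : x = y := congrArg Prod.fst (E.injOn_snd_swapRel N hG hrel rfl)
      exact hxy ▸ hxA
    calc μ (relImg (E.swapRel N) A) ≤ μ K + ε := hKlt.le
    _ ≤ μ A + ε := add_le_add (h1.trans (measure_mono h2)) le_rfl

end BratteliEmb

end Aux3
section Aux4

open Set Filter Topology MeasureTheory

namespace BratteliEmb

variable {B D : Bratteli} (E : BratteliEmb B D)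

lemma isClosed_lam (n : ℕ) (p q : (k : ℕ) → D.E k) : IsClosed (E.lam n p q) := by
  have h : E.lam n p q =
      {z : D.X × D.X | ∀ k, k < n + 1 → z.1.1 k = p k ∧ z.2.1 k = q k} ∩
      {z : D.X × D.X | ∀ k, n + 1 ≤ k →
        ∃ f, z.1.1 k = E.xi1 k f ∧ z.2.1 k = E.xi0 k f} := rfl
  rw [h]
  exact (Bratteli.isClosed_forall_coord (fun k => k < n + 1)
      (fun k a b => a = p k ∧ b = q k)).inter
    (Bratteli.isClosed_forall_coord (fun k => n + 1 ≤ k)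
      (fun k a b => ∃ f, a = E.xi1 k f ∧ b = E.xi0 k f))

lemma lam_congr {n : ℕ} {p q p' q' : (k : ℕ) → D.E k}
    (h1 : ∀ k, k < n + 1 → p k = p' k) (h2 : ∀ k, k < n + 1 → q k = q' k) :
    E.lam n p q = E.lam n p' q' := by
  ext z
  constructor
  · rintro ⟨ha, hb⟩
    exact ⟨fun k hk => by rw [← h1 k hk, ← h2 k hk]; exact ha k hk, hb⟩
  · rintro ⟨ha, hb⟩
    exact ⟨fun k hk => by rw [h1 k hk, h2 k hk]; exact ha k hk, hb⟩

lemma lam_swapped (n : ℕ) (p q : (k : ℕ) → D.E k) :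
    (E.swapped).lam n q p = relInv (E.lam n p q) := by
  ext z
  constructor
  · rintro ⟨h1, h2⟩
    refine ⟨fun k hk => ⟨(h1 k hk).2, (h1 k hk).1⟩, fun k hk => ?_⟩
    obtain ⟨f, hf1, hf2⟩ := h2 k hk
    exact ⟨f, hf2, hf1⟩
  · rintro ⟨h1, h2⟩
    refine ⟨fun k hk => ⟨(h1 k hk).2, (h1 k hk).1⟩, fun k hk => ?_⟩
    obtain ⟨f, hf1, hf2⟩ := h2 k hk
    exact ⟨f, hf2, hf1⟩

variable {μ : MeasureTheory.Measure D.X} [IsProbabilityMeasure μ]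

/-- Invariance identity on measurable subsets of a `λ`-set, assuming `R_E`-invariance. -/
lemma lam_invariant (hμ : D.Invariant μ D.RE) {n : ℕ} {p q : (k : ℕ) → D.E k}
    {U : Set (D.X × D.X)} (hU : U ⊆ E.lam n p q) (hUm : MeasurableSet U)
    (hf : Set.InjOn Prod.fst U) (hs : Set.InjOn Prod.snd U) :
    μ (Prod.fst '' U) = μ (Prod.snd '' U) := by
  set N := n + 1 with hN
  set A := Prod.fst '' U with hA
  have hAm : MeasurableSet A :=
    hUm.image_of_continuousOn_injOn continuous_fst.continuousOn hf
  have hdom : A ⊆ E.dom N := by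
    rintro _ ⟨z, hz, rfl⟩
    intro k hk
    obtain ⟨f, h1, -⟩ := (hU hz).2 k hk
    exact ⟨f, h1⟩
  set G := E.swapRel N with hG
  set T : Set ((D.X × D.X) × D.X) := {t | t.1 ∈ U ∧ (t.1.1, t.2) ∈ G} with hT
  have hTeq : T = (U ×ˢ Set.univ) ∩
      ((fun t : (D.X × D.X) × D.X => (t.1.1, t.2)) ⁻¹' G) := by
    ext t
    simp only [hT, Set.mem_setOf_eq, Set.mem_inter_iff, Set.mem_prod, Set.mem_univ,
      and_true, Set.mem_preimage]
  have hTm : MeasurableSet T := by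
    rw [hTeq]
    exact (hUm.prod MeasurableSet.univ).inter
      (((E.isClosed_swapRel N).measurableSet).preimage
        (((continuous_fst.comp continuous_fst).prodMk continuous_snd).measurable))
  have hπc : Continuous (fun t : (D.X × D.X) × D.X => (t.2, t.1.2)) :=
    continuous_snd.prodMk (continuous_snd.comp continuous_fst)
  have hπinj : Set.InjOn (fun t : (D.X × D.X) × D.X => (t.2, t.1.2)) T := by
    intro t ht t' ht' h
    have h2 : t.2 = t'.2 := (Prod.ext_iff.mp h).1
    have h12 : t.1.2 = t'.1.2 := (Prod.ext_iff.mp h).2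
    have h11 : t.1.1 = t'.1.1 := by
      have h3 : (t.1.1, t.2) = (t'.1.1, t'.2) :=
        E.injOn_snd_swapRel N ht.2 ht'.2 (by simpa using h2)
      exact (Prod.ext_iff.mp h3).1
    exact Prod.ext (Prod.ext h11 h12) h2
  set W := (fun t : (D.X × D.X) × D.X => (t.2, t.1.2)) '' T with hW
  have hWm : MeasurableSet W :=
    hTm.image_of_continuousOn_injOn hπc.continuousOn hπinj
  have hWsub : W ⊆ D.RE := by
    rintro _ ⟨t, ⟨htU, htG⟩, rfl⟩
    apply Bratteli.mem_RE_of_tailEq (n := N)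
    intro k hk
    obtain ⟨f, hf1, hf2⟩ := htG.2 k hk
    obtain ⟨f', hg1, hg2⟩ := (hU htU).2 k hk
    have : f = f' := E.xi1_inj k (by rw [← hf1, ← hg1])
    show t.2.1 k = t.1.2.1 k
    rw [hf2, hg2, this]
  have hWfst : Set.InjOn Prod.fst W := by
    rintro _ ⟨t, ht, rfl⟩ _ ⟨t', ht', rfl⟩ h
    have h2 : t.2 = t'.2 := h
    have h3 : (t.1.1, t.2) = (t'.1.1, t'.2) :=
      E.injOn_snd_swapRel N ht.2 ht'.2 (by simpa using h2)
    have h11 : t.1.1 = t'.1.1 := (Prod.ext_iff.mp h3).1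
    have h1 : t.1 = t'.1 := hf ht.1 ht'.1 h11
    show (t.2, t.1.2) = (t'.2, t'.1.2)
    rw [h1, h2]
  have hWsnd : Set.InjOn Prod.snd W := by
    rintro _ ⟨t, ht, rfl⟩ _ ⟨t', ht', rfl⟩ h
    have h12 : t.1.2 = t'.1.2 := h
    have h1 : t.1 = t'.1 := hs ht.1 ht'.1 h12
    have h3 : (t.1.1, t.2) = (t'.1.1, t'.2) :=
      E.injOn_fst_swapRel N ht.2 ht'.2 (by rw [h1])
    have h2 : t.2 = t'.2 := (Prod.ext_iff.mp h3).2
    show (t.2, t.1.2) = (t'.2, t'.1.2)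
    rw [h1, h2]
  have hfstW : Prod.fst '' W = relImg G A := by
    ext b
    constructor
    · rintro ⟨_, ⟨t, ht, rfl⟩, rfl⟩
      exact mem_relImg.mpr ⟨t.1.1, ⟨t.1, ht.1, rfl⟩, ht.2⟩
    · intro hb
      obtain ⟨x, hxA, hxG⟩ := mem_relImg.mp hb
      obtain ⟨z, hzU, rfl⟩ := hxA
      exact ⟨(b, z.2), ⟨(z, b), ⟨hzU, hxG⟩, rfl⟩, rfl⟩
  have hsndW : Prod.snd '' W = Prod.snd '' U := by
    ext y
    constructor
    · rintro ⟨_, ⟨t, ht, rfl⟩, rfl⟩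
      exact ⟨t.1, ht.1, rfl⟩
    · rintro ⟨z, hzU, rfl⟩
      have hzdom : z.1 ∈ E.dom N := hdom ⟨z, hzU, rfl⟩
      obtain ⟨b, hb⟩ := E.exists_swap hzdom
      exact ⟨(b, z.2), ⟨(z, b), ⟨hzU, hb⟩, rfl⟩, rfl⟩
  calc μ (Prod.fst '' U) = μ (relImg G A) := E.lemMeas hμ hAm hdom
  _ = μ (Prod.fst '' W) := by rw [hfstW]
  _ = μ (Prod.snd '' W) := hμ W hWsub hWm hWfst hWsnd
  _ = μ (Prod.snd '' U) := by rw [hsndW]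

end BratteliEmb

/-- Decomposition lemma: the invariance identity passes to countable unions. -/
lemma invariant_of_pieces {D : Bratteli} (μ : MeasureTheory.Measure D.X)
    (T : ℕ → Set (D.X × D.X)) (hTm : ∀ i, MeasurableSet (T i))
    (hT : ∀ i, ∀ U ⊆ T i, MeasurableSet U → Set.InjOn Prod.fst U →
      Set.InjOn Prod.snd U → μ (Prod.fst '' U) = μ (Prod.snd '' U))
    {U : Set (D.X × D.X)} (hUsub : U ⊆ ⋃ i, T i) (hUm : MeasurableSet U)
    (hf : Set.InjOn Prod.fst U) (hs : Set.InjOn Prod.snd U) :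
    μ (Prod.fst '' U) = μ (Prod.snd '' U) := by
  set V : ℕ → Set (D.X × D.X) := fun i => U ∩ disjointed T i with hV
  have hVm : ∀ i, MeasurableSet (V i) :=
    fun i => hUm.inter (MeasurableSet.disjointed hTm i)
  have hVsub : ∀ i, V i ⊆ T i :=
    fun i => Set.inter_subset_right.trans (disjointed_subset T i)
  have hVU : ∀ i, V i ⊆ U := fun i => Set.inter_subset_left
  have hUnion : ⋃ i, V i = U := by
    rw [hV, ← Set.inter_iUnion, iUnion_disjointed, Set.inter_eq_left]
    exact hUsub
  have hdisj : Pairwise (Function.onFun Disjoint V) := by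
    intro i j hij
    exact (Set.disjoint_left.mpr fun z hz hz' =>
      Set.disjoint_left.mp ((disjoint_disjointed T) hij) hz.2 hz'.2)
  have hid : ∀ i, μ (Prod.fst '' V i) = μ (Prod.snd '' V i) :=
    fun i => hT i (V i) (hVsub i) (hVm i) (hf.mono (hVU i)) (hs.mono (hVU i))
  have hfstm : ∀ i, MeasurableSet (Prod.fst '' V i) := fun i =>
    (hVm i).image_of_continuousOn_injOn continuous_fst.continuousOn (hf.mono (hVU i))
  have hsndm : ∀ i, MeasurableSet (Prod.snd '' V i) := fun i =>
    (hVm i).image_of_continuousOn_injOn continuous_snd.continuousOn (hs.mono (hVU i))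
  have hfdisj : Pairwise (Function.onFun Disjoint fun i => Prod.fst '' V i) := by
    intro i j hij
    apply Set.disjoint_left.mpr
    rintro a ⟨z, hz, rfl⟩ ⟨z', hz', hz'a⟩
    have : z' = z := hf (hVU j hz') (hVU i hz) hz'a
    exact Set.disjoint_left.mp (hdisj hij) hz (this ▸ hz')
  have hsdisj : Pairwise (Function.onFun Disjoint fun i => Prod.snd '' V i) := by
    intro i j hij
    apply Set.disjoint_left.mpr
    rintro a ⟨z, hz, rfl⟩ ⟨z', hz', hz'a⟩
    have : z' = z := hs (hVU j hz') (hVU i hz) hz'a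
    exact Set.disjoint_left.mp (hdisj hij) hz (this ▸ hz')
  calc μ (Prod.fst '' U) = μ (⋃ i, Prod.fst '' V i) := by
        rw [← Set.image_iUnion, hUnion]
  _ = ∑' i, μ (Prod.fst '' V i) := measure_iUnion hfdisj hfstm
  _ = ∑' i, μ (Prod.snd '' V i) := by exact tsum_congr hid
  _ = μ (⋃ i, Prod.snd '' V i) := (measure_iUnion hsdisj hsndm).symm
  _ = μ (Prod.snd '' U) := by rw [← Set.image_iUnion, hUnion]

end Aux4
section Aux5

open Set Filter Topology MeasureTheory

/-- Extend a finite path prefix to a full choice of edges. -/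
noncomputable def Bratteli.extendPath (D : Bratteli) (n : ℕ)
    (p : ∀ k : Fin (n + 1), D.E k) : ∀ k, D.E k :=
  fun k => if h : k < n + 1 then p ⟨k, h⟩ else Classical.choice (D.E_nonempty k)

lemma Bratteli.extendPath_lt (D : Bratteli) {n k : ℕ} (p : ∀ k : Fin (n + 1), D.E k)
    (h : k < n + 1) : D.extendPath n p k = p ⟨k, h⟩ := dif_pos h

namespace BratteliEmb

variable {B D : Bratteli} (E : BratteliEmb B D)

lemma lam_extend (n : ℕ) (p q : (k : ℕ) → D.E k) :
    E.lam n p q = E.lam n (D.extendPath n (fun k => p k)) (D.extendPath n (fun k => q k)) :=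
  E.lam_congr
    (fun k hk => (D.extendPath_lt (fun j : Fin (n + 1) => p j) hk).symm)
    (fun k hk => (D.extendPath_lt (fun j : Fin (n + 1) => q j) hk).symm)

/-- Index type for the countable family of pieces covering `Rfull`. -/
abbrev PieceIdx (D : Bratteli) : Type :=
  Option ((Σ n : ℕ, (∀ k : Fin (n + 1), D.E k) × (∀ k : Fin (n + 1), D.E k)) × Bool)

instance : Nonempty (PieceIdx D) := ⟨none⟩

set_option synthInstance.maxHeartbeats 1000000 in
instance : Countable (PieceIdx D) := inferInstance

/-- The pieces covering `Rfull`. -/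
noncomputable def piece : PieceIdx D → Set (D.X × D.X)
  | none => D.RE
  | some ⟨⟨n, pq⟩, b⟩ =>
      (if b then E else E.swapped).lam n (D.extendPath n pq.1) (D.extendPath n pq.2)

lemma measurableSet_piece (i : PieceIdx D) : MeasurableSet (E.piece i) := by
  match i with
  | none => exact Bratteli.measurableSet_RE
  | some ⟨⟨n, pq⟩, b⟩ =>
      exact (isClosed_lam _ n _ _).measurableSet

lemma Rfull_subset_pieces : E.Rfull ⊆ ⋃ i, E.piece i := by
  intro z hz
  rcases hz with hz | hz
  · exact Set.mem_iUnion.mpr ⟨none, hz⟩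
  · simp only [Set.mem_iUnion] at hz
    obtain ⟨n, p, q, hp, hq, ht, hw, hmem⟩ := hz
    rcases hmem with hmem | hmem
    · rcases hmem with (hmem | hmem) | hmem
      · refine Set.mem_iUnion.mpr ⟨some ⟨⟨n, (fun k => p k, fun k => q k)⟩, true⟩, ?_⟩
        show z ∈ (if true then E else E.swapped).lam n _ _
        rw [if_pos rfl, ← E.lam_extend]
        exact hmem
      · obtain ⟨-, m, -, -, h3⟩ := hmem
        exact Set.mem_iUnion.mpr ⟨none, Bratteli.mem_RE_of_tailEq (n := n + m + 3)
          (fun k hk => h3 k (Nat.lt_of_succ_le hk))⟩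
      · obtain ⟨-, m, -, -, h3⟩ := hmem
        exact Set.mem_iUnion.mpr ⟨none, Bratteli.mem_RE_of_tailEq (n := n + m + 2)
          (fun k hk => h3 k hk)⟩
    · rcases hmem with (hmem | hmem) | hmem
      · refine Set.mem_iUnion.mpr ⟨some ⟨⟨n, (fun k => q k, fun k => p k)⟩, false⟩, ?_⟩
        show z ∈ (if false then E else E.swapped).lam n _ _
        rw [if_neg (by simp), ← (E.swapped).lam_extend, E.lam_swapped]
        exact hmem
      · obtain ⟨-, m, -, -, h3⟩ := hmem
        exact Set.mem_iUnion.mpr ⟨none, Bratteli.mem_RE_of_tailEq (n := n + m + 3)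
          (fun k hk => (h3 k (Nat.lt_of_succ_le hk)).symm)⟩
      · obtain ⟨-, m, -, -, h3⟩ := hmem
        exact Set.mem_iUnion.mpr ⟨none, Bratteli.mem_RE_of_tailEq (n := n + m + 2)
          (fun k hk => (h3 k hk).symm)⟩

variable {μ : MeasureTheory.Measure D.X} [IsProbabilityMeasure μ]

lemma piece_invariant (hμ : D.Invariant μ D.RE) (i : PieceIdx D) :
    ∀ U ⊆ E.piece i, MeasurableSet U → Set.InjOn Prod.fst U → Set.InjOn Prod.snd U →
      μ (Prod.fst '' U) = μ (Prod.snd '' U) := by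
  match i with
  | none => exact fun U hsub hm hf hs => hμ U hsub hm hf hs
  | some ⟨⟨n, pq⟩, true⟩ =>
      exact fun U hsub hm hf hs => E.lam_invariant hμ hsub hm hf hs
  | some ⟨⟨n, pq⟩, false⟩ =>
      exact fun U hsub hm hf hs => (E.swapped).lam_invariant hμ hsub hm hf hs

end BratteliEmb

end Aux5

open MeasureTheory in
/-- A Borel probability measure on `X_E` is `R`-invariant if and only if
it is `R_E`-invariant. -/
theorem stmt13 (B D : Bratteli) (E : BratteliEmb B D)
    (μ : Measure D.X) [IsProbabilityMeasure μ] :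
    D.Invariant μ E.Rfull ↔ D.Invariant μ D.RE := by
  constructor
  · intro h U hsub hm hf hs
    exact h U (hsub.trans Set.subset_union_left) hm hf hs
  · intro hμ U hsub hm hf hs
    obtain ⟨g, hg⟩ := exists_surjective_nat (BratteliEmb.PieceIdx D)
    refine invariant_of_pieces μ (fun i => E.piece (g i))
      (fun i => E.measurableSet_piece (g i))
      (fun i => E.piece_invariant hμ (g i)) ?_ hm hf hs
    have : ⋃ i, E.piece (g i) = ⋃ j, E.piece j := hg.iUnion_comp _
    rw [this]
    exact hsub.trans (E.Rfull_subset_pieces)
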